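/- Let f, g, h ∈ ℝ[x] be monic with deg f = deg g + 1 = deg h + 2, and suppose f = (x+a)·g + b·h with a ∈ ℝ and b < 0. Then f is real-rooted and interlaced by g if and only if g is real-rooted and interlaced by h. -/

import Mathlib

open Polynomial

/-- `f` has only real roots (counted with multiplicity, as many as its degree) and is
interlaced by `g`: if `t₁ ≤ ⋯ ≤ tₙ` are the roots of `f` and `s₁ ≤ ⋯ ≤ s_{n-1}` those of `g`,
then `t₁ ≤ s₁ ≤ t₂ ≤ ⋯ ≤ t_{n-1} ≤ s_{n-1} ≤ tₙ`. -/
def RealRootedInterlacedBy (f g : Polynomial ℝ) : Prop :=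
  ∃ (n : ℕ) (t : Fin (n + 1) → ℝ) (s : Fin n → ℝ),
    f.natDegree = n + 1 ∧ g.natDegree = n ∧
    Monotone t ∧ Monotone s ∧
    f.roots = Multiset.map t Finset.univ.val ∧
    g.roots = Multiset.map s Finset.univ.val ∧
    ∀ i : Fin n, t i.castSucc ≤ s i ∧ s i ≤ t i.succ


section InterlacingHelpers
open Finset

namespace InterHelp

lemma map_univ_eq_sum {m : ℕ} (w : Fin m → ℝ) :
    Multiset.map w Finset.univ.val = ∑ i, ({w i} : Multiset ℝ) := by
  rw [← Multiset.sum_map_singleton (Multiset.map w Finset.univ.val), Multiset.map_map]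
  rfl

lemma map_univ_succAbove {n : ℕ} (v : Fin (n+1) → ℝ) (P : Fin (n+1)) :
    Multiset.map v Finset.univ.val
      = v P ::ₘ Multiset.map (fun i => v (P.succAbove i)) Finset.univ.val := by
  rw [map_univ_eq_sum, map_univ_eq_sum, Fin.sum_univ_succAbove _ P]
  rw [← Multiset.singleton_add, Multiset.singleton_add]

lemma val_succAbove {n : ℕ} (P : Fin (n+1)) (i : Fin n) :
    ((P.succAbove i : Fin (n+1)) : ℕ) = if (i:ℕ) < (P:ℕ) then (i:ℕ) else (i:ℕ)+1 := by
  rcases lt_or_ge (i.castSucc) P with h | h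
  · rw [Fin.succAbove_of_castSucc_lt _ _ h, if_pos]
    · simp
    · simpa [Fin.lt_def] using h
  · rw [Fin.succAbove_of_le_castSucc _ _ h, if_neg]
    · simp
    · simp only [Fin.le_def, Fin.coe_castSucc] at h
      omega

lemma monotone_filter_lt {m : ℕ} {u : Fin m → ℝ} (hu : Monotone u) (c : ℝ) (i : Fin m) :
    u i < c ↔ (i : ℕ) < ((univ.filter (fun j => u j < c)).card) := by
  classical
  constructor
  · intro hi
    have hsub : Finset.Iic i ⊆ univ.filter (fun j => u j < c) := by
      intro j hj
      simp only [Finset.mem_Iic] at hj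
      simp only [Finset.mem_filter, Finset.mem_univ, true_and]
      exact lt_of_le_of_lt (hu hj) hi
    have := Finset.card_le_card hsub
    rw [Fin.card_Iic] at this
    omega
  · intro hi
    by_contra hcon
    push_neg at hcon
    have hsub : univ.filter (fun j => u j < c) ⊆ Finset.Iio i := by
      intro j hj
      simp only [Finset.mem_filter, Finset.mem_univ, true_and] at hj
      simp only [Finset.mem_Iio]
      by_contra hji
      push_neg at hji
      exact absurd (lt_of_le_of_lt (hu hji) hj) (not_lt.mpr hcon)
    have := Finset.card_le_card hsub
    rw [Fin.card_Iio] at this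
    omega

lemma card_filter_val_lt (m N : ℕ) (hN : N ≤ m) :
    ((univ : Finset (Fin m)).filter (fun i : Fin m => (i:ℕ) < N)).card = N := by
  classical
  have : ((univ : Finset (Fin m)).filter (fun i : Fin m => (i:ℕ) < N))
      = Finset.attachFin (Finset.range N) (by intro x hx; simp only [Finset.mem_range] at hx; omega) := by
    ext i
    simp
  rw [this, Finset.card_attachFin, Finset.card_range]


lemma neg_one_pow_cases (j : ℕ) : ((-1:ℝ))^j = 1 ∨ ((-1:ℝ))^j = -1 := by
  rcases Nat.even_or_odd j with h | h
  · exact Or.inl h.neg_one_pow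
  · exact Or.inr h.neg_one_pow

lemma eval_eq_prod (p : Polynomial ℝ) (hp : p.Monic) {m : ℕ} (r : Fin m → ℝ)
    (hd : p.natDegree = m) (hr : p.roots = Multiset.map r Finset.univ.val) (x : ℝ) :
    p.eval x = ∏ i, (x - r i) := by
  have hcard : Multiset.card p.roots = p.natDegree := by
    rw [hr, Multiset.card_map, hd]; simp
  have hprod := Polynomial.C_leadingCoeff_mul_prod_multiset_X_sub_C hcard
  rw [hp.leadingCoeff, map_one, one_mul] at hprod
  conv_lhs => rw [← hprod]
  rw [hr, Multiset.map_map, Polynomial.eval_multiset_prod, Multiset.map_map]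
  rw [Finset.prod_eq_multiset_prod]
  congr 1
  apply Multiset.map_congr rfl
  intro i _
  simp

lemma prod_sign {m : ℕ} (r : Fin m → ℝ) (x : ℝ) (N : ℕ) (hN : N ≤ m)
    (h1 : ∀ i : Fin m, (i:ℕ) < N → r i < x) (h2 : ∀ i : Fin m, N ≤ (i:ℕ) → x < r i) :
    0 < (-1:ℝ)^(m - N) * ∏ i, (x - r i) := by
  classical
  rw [← Finset.prod_filter_mul_prod_filter_not univ (fun i : Fin m => (i:ℕ) < N)]
  have hA : 0 < ∏ i ∈ univ.filter (fun i : Fin m => (i:ℕ) < N), (x - r i) := by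
    apply Finset.prod_pos
    intro i hi
    simp only [Finset.mem_filter, Finset.mem_univ, true_and] at hi
    have := h1 i hi
    linarith
  have hBcard : (univ.filter (fun i : Fin m => ¬ (i:ℕ) < N)).card = m - N := by
    have hadd := Finset.card_filter_add_card_filter_not
      (s := (univ : Finset (Fin m))) (p := fun i : Fin m => (i:ℕ) < N)
    rw [card_filter_val_lt m N hN] at hadd
    simp only [Finset.card_univ, Fintype.card_fin] at hadd
    omega
  have hB : ∏ i ∈ univ.filter (fun i : Fin m => ¬ (i:ℕ) < N), (x - r i)
      = (-1:ℝ)^(m - N) * ∏ i ∈ univ.filter (fun i : Fin m => ¬ (i:ℕ) < N), (r i - x) := by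
    rw [← hBcard, ← Finset.prod_const, ← Finset.prod_mul_distrib]
    apply Finset.prod_congr rfl
    intro i _
    ring
  have hC : 0 < ∏ i ∈ univ.filter (fun i : Fin m => ¬ (i:ℕ) < N), (r i - x) := by
    apply Finset.prod_pos
    intro i hi
    simp only [Finset.mem_filter, Finset.mem_univ, true_and, not_lt] at hi
    have := h2 i hi
    linarith
  rw [hB]
  calc (0:ℝ) < (((-1:ℝ)^(m-N))^2) * ((∏ i ∈ univ.filter (fun i : Fin m => (i:ℕ) < N), (x - r i)) * ∏ i ∈ univ.filter (fun i : Fin m => ¬ (i:ℕ) < N), (r i - x)) := by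
        have hsq : ((-1:ℝ)^(m-N))^2 = 1 := by
          rw [← pow_mul, mul_comm, pow_mul, neg_one_sq, one_pow]
        rw [hsq, one_mul]
        exact mul_pos hA hC
    _ = (-1:ℝ)^(m - N) * ((∏ i ∈ univ.filter (fun i : Fin m => (i:ℕ) < N), (x - r i)) * ((-1:ℝ)^(m - N) * ∏ i ∈ univ.filter (fun i : Fin m => ¬ (i:ℕ) < N), (r i - x))) := by
        ring

lemma root_between (p : Polynomial ℝ) {x y e : ℝ} (hxy : x ≤ y) (he : e = 1 ∨ e = -1)
    (hx : 0 < e * p.eval x) (hy : 0 < -e * p.eval y) :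
    ∃ z ∈ Set.Ioo x y, p.eval z = 0 := by
  have hcont : ContinuousOn (fun z => p.eval z) (Set.Icc x y) :=
    (Polynomial.continuous p).continuousOn
  rcases he with rfl | rfl
  · simp only [one_mul] at hx
    simp only [neg_mul, one_mul, neg_pos] at hy
    have h0 : (0:ℝ) ∈ Set.Ioo (p.eval y) (p.eval x) := ⟨by linarith, by linarith⟩
    obtain ⟨z, hz, hz0⟩ := intermediate_value_Ioo' hxy hcont h0
    exact ⟨z, hz, hz0⟩
  · have hx' : p.eval x < 0 := by nlinarith
    have hy' : 0 < p.eval y := by nlinarith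
    have h0 : (0:ℝ) ∈ Set.Ioo (p.eval x) (p.eval y) := ⟨hx', hy'⟩
    obtain ⟨z, hz, hz0⟩ := intermediate_value_Ioo hxy hcont h0
    exact ⟨z, hz, hz0⟩

lemma exists_pos_gt (p : Polynomial ℝ) (hp : 0 < p.leadingCoeff) (hd : 0 < p.natDegree) (y : ℝ) :
    ∃ x, y < x ∧ 0 < p.eval x := by
  have ht := Polynomial.tendsto_atTop_of_leadingCoeff_nonneg p
    (Polynomial.natDegree_pos_iff_degree_pos.mp hd) hp.le
  have := (ht.eventually_gt_atTop 0).and (Filter.eventually_gt_atTop y)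
  obtain ⟨x, hx1, hx2⟩ := this.exists
  exact ⟨x, hx2, hx1⟩

lemma exists_neg_lt (p : Polynomial ℝ) (hp : p.Monic) (hd : 0 < p.natDegree) (y : ℝ) :
    ∃ x, x < y ∧ 0 < (-1:ℝ)^p.natDegree * p.eval x := by
  set q : Polynomial ℝ := Polynomial.C ((-1:ℝ)^p.natDegree) * p.comp (-Polynomial.X) with hq
  have hdc : (p.comp (-Polynomial.X)).natDegree = p.natDegree := by
    rw [Polynomial.natDegree_comp]
    simp
  have hne : ((-1:ℝ)^p.natDegree) ≠ 0 := pow_ne_zero _ (by norm_num)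
  have hlc : q.leadingCoeff = 1 := by
    rw [hq, Polynomial.leadingCoeff_mul, Polynomial.leadingCoeff_C,
      Polynomial.leadingCoeff_comp (by simp)]
    simp only [hp.leadingCoeff, Polynomial.leadingCoeff_neg, Polynomial.leadingCoeff_X, one_mul]
    rw [← pow_add]
    exact Even.neg_one_pow ⟨p.natDegree, rfl⟩
  have hdq : 0 < q.natDegree := by
    rw [hq, Polynomial.natDegree_C_mul hne, hdc]
    exact hd
  obtain ⟨z, hz, hz0⟩ := exists_pos_gt q (by rw [hlc]; norm_num) hdq (-y)
  refine ⟨-z, by linarith, ?_⟩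
  have : q.eval z = (-1:ℝ)^p.natDegree * p.eval (-z) := by
    rw [hq]
    simp [Polynomial.eval_comp]
  rw [← this]
  exact hz0

lemma roots_eq_of_strictMono (p : Polynomial ℝ) (hp : p ≠ 0) {m : ℕ}
    (hd : p.natDegree = m) (r : Fin m → ℝ) (hr : StrictMono r)
    (hroot : ∀ i, p.IsRoot (r i)) :
    p.roots = Multiset.map r Finset.univ.val := by
  have hnd : (Multiset.map r Finset.univ.val).Nodup :=
    Multiset.Nodup.map hr.injective Finset.univ.nodup
  have hle : Multiset.map r Finset.univ.val ≤ p.roots := by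
    rw [Multiset.le_iff_count]
    intro x
    by_cases hx : x ∈ Multiset.map r Finset.univ.val
    · rw [Multiset.count_eq_one_of_mem hnd hx]
      rw [Nat.one_le_iff_ne_zero, Ne, Multiset.count_eq_zero, not_not]
      obtain ⟨i, _, rfl⟩ := Multiset.mem_map.mp hx
      exact (Polynomial.mem_roots hp).mpr (hroot i)
    · rw [Multiset.count_eq_zero_of_notMem hx]
      omega
  refine (Multiset.eq_of_le_of_card_le hle ?_).symm
  rw [Multiset.card_map]
  simpa [hd] using p.card_roots'

end InterHelp

namespace InterHelp

lemma roots_factor {p : Polynomial ℝ} {c : ℝ} (hp0 : p ≠ 0) (hpc : p.IsRoot c) :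
    p.roots = c ::ₘ (p /ₘ (X - Polynomial.C c)).roots := by
  have hpfac : (X - Polynomial.C c) * (p /ₘ (X - Polynomial.C c)) = p :=
    Polynomial.mul_divByMonic_eq_iff_isRoot.mpr hpc
  conv_lhs => rw [← hpfac]
  rw [Polynomial.roots_mul (by rw [hpfac]; exact hp0), Polynomial.roots_X_sub_C,
    Multiset.singleton_add]

lemma div_RRIB {p q : Polynomial ℝ} {c : ℝ} (hp0 : p ≠ 0) (hq0 : q ≠ 0)
    (hpc : p.IsRoot c) (hqc : q.IsRoot c)
    (H : RealRootedInterlacedBy p q) :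
    RealRootedInterlacedBy (p /ₘ (X - Polynomial.C c)) (q /ₘ (X - Polynomial.C c)) := by
  obtain ⟨n, t, s, hdp, hdq, hmt, hms, hrp, hrq, hint⟩ := H
  have hrp' := roots_factor hp0 hpc
  have hrq' := roots_factor hq0 hqc
  have hcq : c ∈ q.roots := (Polynomial.mem_roots hq0).mpr hqc
  rw [hrq] at hcq
  obtain ⟨jq, _, hjq⟩ := Multiset.mem_map.mp hcq
  rcases n with _ | m
  · exact jq.elim0
  have hcp : c ∈ p.roots := (Polynomial.mem_roots hp0).mpr hpc
  rw [hrp] at hcp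
  obtain ⟨jp, _, hjp⟩ := Multiset.mem_map.mp hcp
  have hPex : ∃ P : Fin (m+2), t P = c ∧ ((P:ℕ) = (jq:ℕ) ∨ (P:ℕ) = (jq:ℕ)+1) := by
    rcases le_or_gt jp jq.castSucc with hle | hlt
    · refine ⟨jq.castSucc, le_antisymm (hjq ▸ (hint jq).1) (hjp ▸ hmt hle), Or.inl (by simp)⟩
    · refine ⟨jq.succ, le_antisymm (hjp ▸ hmt (Fin.castSucc_lt_iff_succ_le.mp hlt))
        (hjq ▸ (hint jq).2), Or.inr (by simp)⟩
  obtain ⟨P, hPc, hPJ⟩ := hPex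
  have hmt' : ∀ (x y : Fin (m+2)), (x:ℕ) ≤ (y:ℕ) → t x ≤ t y :=
    fun x y hxy => hmt (Fin.le_def.mpr hxy)
  have hms' : ∀ (x y : Fin (m+1)), (x:ℕ) ≤ (y:ℕ) → s x ≤ s y :=
    fun x y hxy => hms (Fin.le_def.mpr hxy)
  have hts : ∀ (x : Fin (m+2)) (y : Fin (m+1)), (x:ℕ) ≤ (y:ℕ) → t x ≤ s y := by
    intro x y hxy
    exact le_trans (hmt' x y.castSucc (by simpa using hxy)) (hint y).1
  have hst : ∀ (y : Fin (m+1)) (x : Fin (m+2)), (y:ℕ) < (x:ℕ) → s y ≤ t x := by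
    intro y x hxy
    exact le_trans (hint y).2 (hmt' y.succ x (by simpa using hxy))
  refine ⟨m, fun i => t (P.succAbove i), fun i => s (jq.succAbove i), ?_, ?_, ?_, ?_, ?_, ?_, ?_⟩
  · rw [Polynomial.natDegree_divByMonic p (Polynomial.monic_X_sub_C c), hdp,
      Polynomial.natDegree_X_sub_C]
    omega
  · rw [Polynomial.natDegree_divByMonic q (Polynomial.monic_X_sub_C c), hdq,
      Polynomial.natDegree_X_sub_C]
    omega
  · intro x y hxy
    apply hmt'
    rw [val_succAbove, val_succAbove]
    have : (x:ℕ) ≤ (y:ℕ) := hxy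
    split_ifs <;> omega
  · intro x y hxy
    apply hms'
    rw [val_succAbove, val_succAbove]
    have : (x:ℕ) ≤ (y:ℕ) := hxy
    split_ifs <;> omega
  · rw [map_univ_succAbove t P, hPc] at hrp
    rw [hrp'] at hrp
    exact (Multiset.cons_inj_right c).mp hrp
  · rw [map_univ_succAbove s jq, hjq] at hrq
    rw [hrq'] at hrq
    exact (Multiset.cons_inj_right c).mp hrq
  · intro i
    have hA : ((P.succAbove i.castSucc) : ℕ)
        = if (i:ℕ) < (P:ℕ) then (i:ℕ) else (i:ℕ)+1 := by
      rw [val_succAbove]; simp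
    have hA' : ((P.succAbove i.succ) : ℕ)
        = if (i:ℕ)+1 < (P:ℕ) then (i:ℕ)+1 else (i:ℕ)+2 := by
      rw [val_succAbove]; simp
    have hB : ((jq.succAbove i) : ℕ) = if (i:ℕ) < (jq:ℕ) then (i:ℕ) else (i:ℕ)+1 := by
      rw [val_succAbove]
    constructor
    · apply hts
      rw [hA, hB]
      rcases hPJ with hP | hP <;> split_ifs <;> omega
    · apply hst
      rw [hA', hB]
      rcases hPJ with hP | hP <;> split_ifs <;> omega

end InterHelp

namespace InterHelp
open Polynomial Finset

lemma mul_RRIB {p q : Polynomial ℝ} {c : ℝ} (hp0 : p ≠ 0) (hq0 : q ≠ 0)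
    (hpc : p.IsRoot c) (hqc : q.IsRoot c)
    (H : RealRootedInterlacedBy (p /ₘ (X - Polynomial.C c)) (q /ₘ (X - Polynomial.C c))) :
    RealRootedInterlacedBy p q := by
  obtain ⟨n', t', s', hdp', hdq', hmt', hms', hrpd, hrqd, hint'⟩ := H
  have hrp' := roots_factor hp0 hpc
  have hrq' := roots_factor hq0 hqc
  have hpfac : (X - Polynomial.C c) * (p /ₘ (X - Polynomial.C c)) = p :=
    Polynomial.mul_divByMonic_eq_iff_isRoot.mpr hpc
  have hqfac : (X - Polynomial.C c) * (q /ₘ (X - Polynomial.C c)) = q :=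
    Polynomial.mul_divByMonic_eq_iff_isRoot.mpr hqc
  have hp'0 : p /ₘ (X - Polynomial.C c) ≠ 0 := by
    intro h0; rw [h0, mul_zero] at hpfac; exact hp0 hpfac.symm
  have hq'0 : q /ₘ (X - Polynomial.C c) ≠ 0 := by
    intro h0; rw [h0, mul_zero] at hqfac; exact hq0 hqfac.symm
  have hdp : p.natDegree = n' + 2 := by
    conv_lhs => rw [← hpfac]
    rw [Polynomial.natDegree_mul (Polynomial.X_sub_C_ne_zero c) hp'0,
      Polynomial.natDegree_X_sub_C, hdp']
    omega
  have hdq : q.natDegree = n' + 1 := by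
    conv_lhs => rw [← hqfac]
    rw [Polynomial.natDegree_mul (Polynomial.X_sub_C_ne_zero c) hq'0,
      Polynomial.natDegree_X_sub_C, hdq']
    omega
  classical
  obtain ⟨N, hN, hcharT⟩ : ∃ N, N ≤ n'+1 ∧ ∀ i : Fin (n'+1), (t' i < c ↔ (i:ℕ) < N) :=
    ⟨((univ : Finset (Fin (n'+1))).filter (fun i : Fin (n'+1) => t' i < c)).card,
      le_trans (Finset.card_filter_le _ _) (by simp),
      fun i => monotone_filter_lt hmt' c i⟩
  obtain ⟨M, hM, hcharS⟩ : ∃ M, M ≤ n' ∧ ∀ i : Fin n', (s' i < c ↔ (i:ℕ) < M) :=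
    ⟨((univ : Finset (Fin n')).filter (fun i : Fin n' => s' i < c)).card,
      le_trans (Finset.card_filter_le _ _) (by simp),
      fun i => monotone_filter_lt hms' c i⟩
  have hMN : M ≤ N := by
    by_cases hM0 : M = 0
    · omega
    · have hi : ((⟨M-1, by omega⟩ : Fin n') : ℕ) < M := by simp; omega
      have h1 : s' ⟨M-1, by omega⟩ < c := (hcharS _).mpr hi
      have h2 : t' (Fin.castSucc ⟨M-1, by omega⟩) < c :=
        lt_of_le_of_lt (hint' ⟨M-1, by omega⟩).1 h1
      have := (hcharT _).mp h2
      simp only [Fin.coe_castSucc] at this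
      omega
  have hNM : N ≤ M + 1 := by
    by_contra hcon
    push_neg at hcon
    have hMn : M < n' := by omega
    have hi : ((Fin.succ ⟨M, hMn⟩ : Fin (n'+1)) : ℕ) < N := by simp; omega
    have h1 : t' (Fin.succ ⟨M, hMn⟩) < c := (hcharT _).mpr hi
    have h2 : s' ⟨M, hMn⟩ < c := lt_of_le_of_lt (hint' ⟨M, hMn⟩).2 h1
    have := (hcharS _).mp h2
    simp at this
  -- the inserted sequences
  set t : Fin (n'+2) → ℝ := fun i =>
    if h : (i:ℕ) < N then t' ⟨(i:ℕ), by omega⟩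
    else if h2 : (i:ℕ) = N then c
    else t' ⟨(i:ℕ)-1, by have := i.isLt; omega⟩ with htdef
  set s : Fin (n'+1) → ℝ := fun i =>
    if h : (i:ℕ) < M then s' ⟨(i:ℕ), by omega⟩
    else if h2 : (i:ℕ) = M then c
    else s' ⟨(i:ℕ)-1, by have := i.isLt; omega⟩ with hsdef
  have ht1 : ∀ (i : Fin (n'+2)) (h : (i:ℕ) < N), t i = t' ⟨(i:ℕ), by omega⟩ := by
    intro i h; simp only [htdef]; rw [dif_pos h]
  have ht2 : ∀ (i : Fin (n'+2)), (i:ℕ) = N → t i = c := by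
    intro i h; simp only [htdef]; rw [dif_neg (by omega), dif_pos h]
  have ht3 : ∀ (i : Fin (n'+2)) (h : N < (i:ℕ)), t i = t' ⟨(i:ℕ)-1, by have := i.isLt; omega⟩ := by
    intro i h; simp only [htdef]; rw [dif_neg (by omega), dif_neg (by omega)]
  have hs1 : ∀ (i : Fin (n'+1)) (h : (i:ℕ) < M), s i = s' ⟨(i:ℕ), by omega⟩ := by
    intro i h; simp only [hsdef]; rw [dif_pos h]
  have hs2 : ∀ (i : Fin (n'+1)), (i:ℕ) = M → s i = c := by
    intro i h; simp only [hsdef]; rw [dif_neg (by omega), dif_pos h]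
  have hs3 : ∀ (i : Fin (n'+1)) (h : M < (i:ℕ)), s i = s' ⟨(i:ℕ)-1, by have := i.isLt; omega⟩ := by
    intro i h; simp only [hsdef]; rw [dif_neg (by omega), dif_neg (by omega)]
  have hmt'' : ∀ (x y : Fin (n'+1)), (x:ℕ) ≤ (y:ℕ) → t' x ≤ t' y :=
    fun x y hxy => hmt' (Fin.le_def.mpr hxy)
  have hms'' : ∀ (x y : Fin n'), (x:ℕ) ≤ (y:ℕ) → s' x ≤ s' y :=
    fun x y hxy => hms' (Fin.le_def.mpr hxy)
  have hmt2 : Monotone t := by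
    intro x y hxy
    have hxy' : (x:ℕ) ≤ (y:ℕ) := hxy
    rcases Nat.lt_trichotomy (x:ℕ) N with hx | hx | hx <;>
      rcases Nat.lt_trichotomy (y:ℕ) N with hy | hy | hy
    · rw [ht1 x hx, ht1 y hy]; exact hmt'' _ _ (by simp [hxy'])
    · rw [ht1 x hx, ht2 y hy]; exact le_of_lt ((hcharT _).mpr (by simp [hx]))
    · rw [ht1 x hx, ht3 y hy]; exact hmt'' _ _ (by simp; omega)
    · omega
    · rw [ht2 x hx, ht2 y hy]
    · rw [ht2 x hx, ht3 y hy]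
      exact le_of_not_gt (fun hcon => by rw [hcharT] at hcon; simp at hcon; omega)
    · omega
    · omega
    · rw [ht3 x hx, ht3 y hy]; exact hmt'' _ _ (by simp; omega)
  have hms2 : Monotone s := by
    intro x y hxy
    have hxy' : (x:ℕ) ≤ (y:ℕ) := hxy
    rcases Nat.lt_trichotomy (x:ℕ) M with hx | hx | hx <;>
      rcases Nat.lt_trichotomy (y:ℕ) M with hy | hy | hy
    · rw [hs1 x hx, hs1 y hy]; exact hms'' _ _ (by simp [hxy'])
    · rw [hs1 x hx, hs2 y hy]; exact le_of_lt ((hcharS _).mpr (by simp [hx]))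
    · rw [hs1 x hx, hs3 y hy]; exact hms'' _ _ (by simp; omega)
    · omega
    · rw [hs2 x hx, hs2 y hy]
    · rw [hs2 x hx, hs3 y hy]
      exact le_of_not_gt (fun hcon => by rw [hcharS] at hcon; simp at hcon; omega)
    · omega
    · omega
    · rw [hs3 x hx, hs3 y hy]; exact hms'' _ _ (by simp; omega)
  have hmapt : Multiset.map t Finset.univ.val = c ::ₘ Multiset.map t' Finset.univ.val := by
    have hPlt : N < n'+2 := by omega
    have hP : ((⟨N, hPlt⟩ : Fin (n'+2)) : ℕ) = N := rfl
    have step : ∀ i : Fin (n'+1), t (Fin.succAbove ⟨N, hPlt⟩ i) = t' i := by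
      intro i
      by_cases h : (i:ℕ) < N
      · have hv : ((Fin.succAbove ⟨N, hPlt⟩ i : Fin (n'+2)) : ℕ) = (i:ℕ) := by
          rw [val_succAbove, hP, if_pos h]
        rw [ht1 _ (by rw [hv]; exact h)]
        refine congrArg t' (Fin.ext ?_)
        show ((Fin.succAbove ⟨N, hPlt⟩ i : Fin (n'+2)) : ℕ) = (i:ℕ)
        exact hv
      · have hv : ((Fin.succAbove ⟨N, hPlt⟩ i : Fin (n'+2)) : ℕ) = (i:ℕ)+1 := by
          rw [val_succAbove, hP, if_neg h]
        rw [ht3 _ (by rw [hv]; omega)]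
        refine congrArg t' (Fin.ext ?_)
        show ((Fin.succAbove ⟨N, hPlt⟩ i : Fin (n'+2)) : ℕ) - 1 = (i:ℕ)
        omega
    exact (map_univ_succAbove t ⟨N, hPlt⟩).trans
      (congrArg₂ Multiset.cons (ht2 _ hP) (Multiset.map_congr rfl (fun i _ => step i)))
  have hmaps : Multiset.map s Finset.univ.val = c ::ₘ Multiset.map s' Finset.univ.val := by
    have hPlt : M < n'+1 := by omega
    have hP : ((⟨M, hPlt⟩ : Fin (n'+1)) : ℕ) = M := rfl
    have step : ∀ i : Fin n', s (Fin.succAbove ⟨M, hPlt⟩ i) = s' i := by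
      intro i
      by_cases h : (i:ℕ) < M
      · have hv : ((Fin.succAbove ⟨M, hPlt⟩ i : Fin (n'+1)) : ℕ) = (i:ℕ) := by
          rw [val_succAbove, hP, if_pos h]
        rw [hs1 _ (by rw [hv]; exact h)]
        refine congrArg s' (Fin.ext ?_)
        show ((Fin.succAbove ⟨M, hPlt⟩ i : Fin (n'+1)) : ℕ) = (i:ℕ)
        exact hv
      · have hv : ((Fin.succAbove ⟨M, hPlt⟩ i : Fin (n'+1)) : ℕ) = (i:ℕ)+1 := by
          rw [val_succAbove, hP, if_neg h]
        rw [hs3 _ (by rw [hv]; omega)]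
        refine congrArg s' (Fin.ext ?_)
        show ((Fin.succAbove ⟨M, hPlt⟩ i : Fin (n'+1)) : ℕ) - 1 = (i:ℕ)
        omega
    exact (map_univ_succAbove s ⟨M, hPlt⟩).trans
      (congrArg₂ Multiset.cons (hs2 _ hP) (Multiset.map_congr rfl (fun i _ => step i)))
  refine ⟨n'+1, t, s, hdp, hdq, hmt2, hms2, ?_, ?_, ?_⟩
  · rw [hrp', hrpd, hmapt]
  · rw [hrq', hrqd, hmaps]
  · intro i
    have hic : ((i.castSucc : Fin (n'+2)) : ℕ) = (i:ℕ) := by simp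
    have his : ((i.succ : Fin (n'+2)) : ℕ) = (i:ℕ)+1 := by simp
    constructor
    · -- t i.castSucc ≤ s i
      rcases Nat.lt_trichotomy (i:ℕ) N with hx | hx | hx <;>
        rcases Nat.lt_trichotomy (i:ℕ) M with hy | hy | hy
      · rw [ht1 i.castSucc (by omega), hs1 i hy]
        have hq := (hint' ⟨(i:ℕ), by omega⟩).1
        have he : (Fin.castSucc (⟨(i:ℕ), by omega⟩ : Fin n')) = i := Fin.ext rfl
        rw [he] at hq
        simpa using hq
      · rw [ht1 i.castSucc (by omega), hs2 i hy]
        exact le_of_lt ((hcharT _).mpr (by simpa using hx))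
      · omega
      · omega
      · rw [ht2 i.castSucc (by omega), hs2 i hy]
      · -- i = N, i > M, so N = M+1 and i-1 = M
        rw [ht2 i.castSucc (by omega), hs3 i hy]
        exact le_of_not_gt (fun hcon => by rw [hcharS] at hcon; simp at hcon; omega)
      · omega
      · omega
      · rw [ht3 i.castSucc (by omega), hs3 i hy]
        have hb : ((i:ℕ)-1) < n' := by have := i.isLt; omega
        have := (hint' ⟨(i:ℕ)-1, hb⟩).1
        simpa using this
    · -- s i ≤ t i.succ
      rcases Nat.lt_trichotomy (i:ℕ) M with hy | hy | hy <;>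
        rcases Nat.lt_trichotomy ((i:ℕ)+1) N with hx | hx | hx
      · rw [hs1 i hy, ht1 i.succ (by omega)]
        have hb : (i:ℕ) < n' := by omega
        have := (hint' ⟨(i:ℕ), hb⟩).2
        simpa using this
      · rw [hs1 i hy, ht2 i.succ (by omega)]
        exact le_of_lt ((hcharS _).mpr (by simpa using hy))
      · omega
      · omega
      · rw [hs2 i hy, ht2 i.succ (by omega)]
      · -- i = M, i+1 > N so N = M = i
        rw [hs2 i hy, ht3 i.succ (by omega)]
        exact le_of_not_gt (fun hcon => by rw [hcharT] at hcon; simp at hcon; omega)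
      · omega
      · omega
      · rw [hs3 i hy, ht3 i.succ (by omega)]
        have hb : ((i:ℕ)-1) < n' := by omega
        have := (hint' ⟨(i:ℕ)-1, hb⟩).2
        have hval : (Fin.succ ⟨(i:ℕ)-1, hb⟩ : Fin (n'+1)) = ⟨(i:ℕ)+1-1, by have := i.isLt; omega⟩ := by
          apply Fin.ext; simp; omega
        rw [hval] at this
        simpa using this

end InterHelp

namespace InterHelp
open Polynomial Finset

lemma sign_flip {e A b : ℝ} (he : e = 1 ∨ e = -1) (hb : b < 0)
    (H : 0 < e * -1 * (b * A)) : 0 < e * A := by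
  rcases he with rfl | rfl <;> nlinarith

lemma sign_flip' {e A b : ℝ} (he : e = 1 ∨ e = -1) (hb : b < 0)
    (H : 0 < e * A) : 0 < e * -1 * (b * A) := by
  rcases he with rfl | rfl <;> nlinarith

lemma forward_generic (f g h : Polynomial ℝ) (a b : ℝ)
    (hf : f.Monic) (hg : g.Monic) (hh : h.Monic)
    (hdeg1 : f.natDegree = g.natDegree + 1) (hdeg2 : g.natDegree = h.natDegree + 1)
    (hb : b < 0)
    (hrec : f = (X + Polynomial.C a) * g + Polynomial.C b * h)
    (hcr : ∀ x : ℝ, ¬(f.IsRoot x ∧ g.IsRoot x))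
    (H : RealRootedInterlacedBy f g) : RealRootedInterlacedBy g h := by
  obtain ⟨n, t, s, hdf, hdg, hmt, hms, hrf, hrg, hint⟩ := H
  set k := h.natDegree with hk
  have hn : n = k + 1 := by omega
  subst hn
  have hgroot : ∀ i, g.IsRoot (s i) := by
    intro i
    apply Polynomial.isRoot_of_mem_roots
    rw [hrg]
    exact Multiset.mem_map_of_mem s (Finset.mem_val.mpr (Finset.mem_univ i))
  have hfroot : ∀ j, f.IsRoot (t j) := by
    intro j
    apply Polynomial.isRoot_of_mem_roots
    rw [hrf]
    exact Multiset.mem_map_of_mem t (Finset.mem_val.mpr (Finset.mem_univ j))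
  have hstrict1 : ∀ i, t i.castSucc < s i := fun i =>
    lt_of_le_of_ne (hint i).1 (fun he => hcr (s i) ⟨he ▸ hfroot i.castSucc, hgroot i⟩)
  have hstrict2 : ∀ i, s i < t i.succ := fun i =>
    lt_of_le_of_ne (hint i).2 (fun he => hcr (s i) ⟨he.symm ▸ hfroot i.succ, hgroot i⟩)
  have hmt' : ∀ (x y : Fin (k+2)), (x:ℕ) ≤ (y:ℕ) → t x ≤ t y :=
    fun x y hxy => hmt (Fin.le_def.mpr hxy)
  have hms' : ∀ (x y : Fin (k+1)), (x:ℕ) ≤ (y:ℕ) → s x ≤ s y :=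
    fun x y hxy => hms (Fin.le_def.mpr hxy)
  -- sign of h at the roots of g
  have hsignh : ∀ i : Fin (k+1), 0 < (-1:ℝ)^(k-(i:ℕ)) * h.eval (s i) := by
    intro i
    have hps := prod_sign t (s i) ((i:ℕ)+1) (by have := i.isLt; omega)
      (fun j hj => lt_of_le_of_lt (hmt' j i.castSucc (by simp; omega)) (hstrict1 i))
      (fun j hj => lt_of_lt_of_le (hstrict2 i) (hmt' i.succ j (by simp; omega)))
    rw [← eval_eq_prod f hf t hdf hrf (s i)] at hps
    have hexp : k + 2 - ((i:ℕ)+1) = (k - (i:ℕ)) + 1 := by have := i.isLt; omega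
    rw [hexp, pow_succ] at hps
    have hev : f.eval (s i) = b * h.eval (s i) := by
      have h0 : g.eval (s i) = 0 := hgroot i
      rw [hrec]
      simp [h0]
    rw [hev] at hps
    exact sign_flip (neg_one_pow_cases _) hb hps
  -- roots of h between consecutive roots of g
  have hroots : ∀ i : Fin k, ∃ z ∈ Set.Ioo (s i.castSucc) (s i.succ), h.eval z = 0 := by
    intro i
    apply root_between h (hms' i.castSucc i.succ (by simp)) (neg_one_pow_cases (k - (i:ℕ)))
    · simpa using hsignh i.castSucc
    · have hexp : k - (i:ℕ) = (k - ((i:ℕ)+1)) + 1 := by have := i.isLt; omega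
      have := hsignh i.succ
      simp only [Fin.val_succ] at this
      rw [hexp, pow_succ]
      nlinarith [this]
  choose r hrIoo hrzero using hroots
  have hrmono : StrictMono r := by
    intro i j hij
    have h1 := (hrIoo i).2
    have h2 := (hrIoo j).1
    have h3 : s i.succ ≤ s j.castSucc := hms' i.succ j.castSucc
      (by simp only [Fin.val_succ, Fin.coe_castSucc]; have := Fin.lt_def.mp hij; omega)
    linarith
  refine ⟨k, s, r, by omega, rfl, hms, hrmono.monotone, hrg, ?_, ?_⟩
  · exact roots_eq_of_strictMono h hh.ne_zero rfl r hrmono (fun i => hrzero i)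
  · exact fun i => ⟨le_of_lt (hrIoo i).1, le_of_lt (hrIoo i).2⟩

lemma backward_generic (f g h : Polynomial ℝ) (a b : ℝ)
    (hf : f.Monic) (hg : g.Monic) (hh : h.Monic)
    (hdeg1 : f.natDegree = g.natDegree + 1) (hdeg2 : g.natDegree = h.natDegree + 1)
    (hb : b < 0)
    (hrec : f = (X + Polynomial.C a) * g + Polynomial.C b * h)
    (hcr : ∀ x : ℝ, ¬(f.IsRoot x ∧ g.IsRoot x))
    (H : RealRootedInterlacedBy g h) : RealRootedInterlacedBy f g := by
  obtain ⟨n, s, r, hdg, hdh, hms, hmr, hrg, hrh, hint⟩ := H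
  set k := h.natDegree with hk
  have hn : n = k := by omega
  subst hn
  have hdf : f.natDegree = k + 2 := by omega
  have hgroot : ∀ i, g.IsRoot (s i) := by
    intro i
    apply Polynomial.isRoot_of_mem_roots
    rw [hrg]
    exact Multiset.mem_map_of_mem s (Finset.mem_val.mpr (Finset.mem_univ i))
  have hhroot : ∀ j, h.IsRoot (r j) := by
    intro j
    apply Polynomial.isRoot_of_mem_roots
    rw [hrh]
    exact Multiset.mem_map_of_mem r (Finset.mem_val.mpr (Finset.mem_univ j))
  have hcr2 : ∀ x : ℝ, ¬(g.IsRoot x ∧ h.IsRoot x) := by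
    intro x ⟨hgx, hhx⟩
    apply hcr x
    refine ⟨?_, hgx⟩
    have e1 : g.eval x = 0 := hgx
    have e2 : h.eval x = 0 := hhx
    have : f.eval x = 0 := by rw [hrec]; simp [e1, e2]
    exact this
  have hstrict1 : ∀ i, s i.castSucc < r i := fun i =>
    lt_of_le_of_ne (hint i).1 (fun he => hcr2 (r i) ⟨he ▸ hgroot i.castSucc, hhroot i⟩)
  have hstrict2 : ∀ i, r i < s i.succ := fun i =>
    lt_of_le_of_ne (hint i).2 (fun he => hcr2 (r i) ⟨he.symm ▸ hgroot i.succ, hhroot i⟩)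
  have hms' : ∀ (x y : Fin (k+1)), (x:ℕ) ≤ (y:ℕ) → s x ≤ s y :=
    fun x y hxy => hms (Fin.le_def.mpr hxy)
  have hmr' : ∀ (x y : Fin k), (x:ℕ) ≤ (y:ℕ) → r x ≤ r y :=
    fun x y hxy => hmr (Fin.le_def.mpr hxy)
  -- sign of f at the roots of g
  have hsignf : ∀ i : Fin (k+1), 0 < (-1:ℝ)^(k+1-(i:ℕ)) * f.eval (s i) := by
    intro i
    have hps := prod_sign r (s i) (i:ℕ) (by have := i.isLt; omega)
      (fun j hj => lt_of_lt_of_le (hstrict2 j)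
        (hms' j.succ i (by simp; omega)))
      (fun j hj => lt_of_le_of_lt (hms' i j.castSucc (by simp; omega)) (hstrict1 j))
    rw [← eval_eq_prod h hh r rfl hrh (s i)] at hps
    have hev : f.eval (s i) = b * h.eval (s i) := by
      have h0 : g.eval (s i) = 0 := hgroot i
      rw [hrec]
      simp [h0]
    have hexp : k + 1 - (i:ℕ) = (k - (i:ℕ)) + 1 := by have := i.isLt; omega
    rw [hexp, pow_succ, hev]
    exact sign_flip' (neg_one_pow_cases _) hb hps
  -- inner roots of f
  have hinner : ∀ i : Fin k, ∃ z ∈ Set.Ioo (s i.castSucc) (s i.succ), f.eval z = 0 := by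
    intro i
    apply root_between f (hms' i.castSucc i.succ (by simp)) (neg_one_pow_cases (k + 1 - (i:ℕ)))
    · simpa using hsignf i.castSucc
    · have hexp : k + 1 - (i:ℕ) = (k + 1 - ((i:ℕ)+1)) + 1 := by have := i.isLt; omega
      have := hsignf i.succ
      simp only [Fin.val_succ] at this
      rw [hexp, pow_succ]
      nlinarith [this]
  choose u huIoo huzero using hinner
  -- outer roots
  have hlastsign : 0 < - f.eval (s (Fin.last k)) := by
    have := hsignf (Fin.last k)
    simp only [Fin.val_last] at this
    have hexp : k + 1 - k = 1 := by omega
    rw [hexp, pow_one] at this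
    linarith
  obtain ⟨w2, hw2gt, hw2pos⟩ := exists_pos_gt f (by rw [hf.leadingCoeff]; norm_num)
    (by omega) (s (Fin.last k))
  obtain ⟨zp, hzpIoo, hzpzero⟩ := root_between f (le_of_lt hw2gt) (Or.inr rfl)
    (by nlinarith [hlastsign]) (by nlinarith [hw2pos])
  obtain ⟨w1, hw1lt, hw1pos⟩ := exists_neg_lt f hf (by omega) (s 0)
  have hw1pos' : 0 < (-1:ℝ)^k * f.eval w1 := by
    rw [hdf] at hw1pos
    have : (-1:ℝ)^(k+2) = (-1:ℝ)^k := by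
      rw [pow_add]; norm_num
    rwa [this] at hw1pos
  obtain ⟨zm, hzmIoo, hzmzero⟩ := root_between f hw1lt.le (neg_one_pow_cases k)
    hw1pos'
    (by
      have := hsignf 0
      simp only [Fin.val_zero, Nat.sub_zero] at this
      have hexp : k + 1 = k + 1 := rfl
      rw [pow_succ] at this
      nlinarith [this])
  -- build t
  set t : Fin (k+2) → ℝ := fun j =>
    if h1 : (j:ℕ) = 0 then zm
    else if h2 : (j:ℕ) ≤ k then u ⟨(j:ℕ)-1, by omega⟩
    else zp with htdef
  have ht0 : ∀ (j : Fin (k+2)), (j:ℕ) = 0 → t j = zm := by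
    intro j hj; simp only [htdef]; rw [dif_pos hj]
  have htm : ∀ (j : Fin (k+2)) (h1 : (j:ℕ) ≠ 0) (h2 : (j:ℕ) ≤ k),
      t j = u ⟨(j:ℕ)-1, by omega⟩ := by
    intro j h1 h2; simp only [htdef]; rw [dif_neg h1, dif_pos h2]
  have hte : ∀ (j : Fin (k+2)), k < (j:ℕ) → t j = zp := by
    intro j hj; simp only [htdef]; rw [dif_neg (by omega), dif_neg (by omega)]
  have huin : ∀ i : Fin k, s i.castSucc < u i ∧ u i < s i.succ :=
    fun i => ⟨(huIoo i).1, (huIoo i).2⟩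
  have htmono : StrictMono t := by
    intro x y hxy
    have hxy' : (x:ℕ) < (y:ℕ) := hxy
    rcases Nat.eq_zero_or_pos (x:ℕ) with hx0 | hx0
    · rcases le_or_gt (y:ℕ) k with hyk | hyk
      · rw [ht0 x hx0, htm y (by omega) hyk]
        have h1 : s 0 ≤ s (Fin.castSucc ⟨(y:ℕ)-1, by omega⟩) := hms' _ _ (by simp)
        have h2 := (huin ⟨(y:ℕ)-1, by omega⟩).1
        have h3 : zm < s 0 := hzmIoo.2
        linarith
      · rw [ht0 x hx0, hte y hyk]
        have h1 : s 0 ≤ s (Fin.last k) := hms' _ _ (by simp)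
        have h3 : zm < s 0 := hzmIoo.2
        have h4 : s (Fin.last k) < zp := hzpIoo.1
        linarith
    · rcases le_or_gt (y:ℕ) k with hyk | hyk
      · rw [htm x (by omega) (by omega), htm y (by omega) hyk]
        have h1 := (huin ⟨(x:ℕ)-1, by omega⟩).2
        have h2 := (huin ⟨(y:ℕ)-1, by omega⟩).1
        have h3 : s (Fin.succ ⟨(x:ℕ)-1, by omega⟩) ≤ s (Fin.castSucc ⟨(y:ℕ)-1, by omega⟩) :=
          hms' _ _ (by simp; omega)
        linarith
      · rcases le_or_gt (x:ℕ) k with hxk | hxk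
        · rw [htm x (by omega) hxk, hte y hyk]
          have h1 := (huin ⟨(x:ℕ)-1, by omega⟩).2
          have h3 : s (Fin.succ ⟨(x:ℕ)-1, by omega⟩) ≤ s (Fin.last k) := hms' _ _ (by simp; omega)
          have h4 : s (Fin.last k) < zp := hzpIoo.1
          linarith
        · exfalso
          have := y.isLt
          omega
  have htroot : ∀ j, f.IsRoot (t j) := by
    intro j
    rcases Nat.eq_zero_or_pos (j:ℕ) with h0 | h0
    · rw [ht0 j h0]; exact hzmzero
    · rcases le_or_gt (j:ℕ) k with hk' | hk'
      · rw [htm j (by omega) hk']; exact huzero _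
      · rw [hte j hk']; exact hzpzero
  have hrootsf : f.roots = Multiset.map t Finset.univ.val :=
    roots_eq_of_strictMono f hf.ne_zero hdf t htmono htroot
  refine ⟨k+1, t, s, hdf, by omega, htmono.monotone, hms, hrootsf, hrg, ?_⟩
  intro i
  have hiv : ((i.castSucc : Fin (k+2)) : ℕ) = (i:ℕ) := rfl
  have hiv2 : ((i.succ : Fin (k+2)) : ℕ) = (i:ℕ)+1 := rfl
  constructor
  · rcases Nat.eq_zero_or_pos (i:ℕ) with h0 | h0
    · rw [ht0 i.castSucc (by rw [hiv, h0])]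
      have h3 : zm < s 0 := hzmIoo.2
      have h1 : s 0 ≤ s i := hms' 0 i (Nat.zero_le _)
      linarith
    · have hb0 : (i:ℕ)-1 < k := by have := i.isLt; omega
      have hrw : t i.castSucc = u ⟨(i:ℕ)-1, hb0⟩ :=
        htm i.castSucc (by rw [hiv]; omega) (by rw [hiv]; have := i.isLt; omega)
      rw [hrw]
      have h2 := (huIoo ⟨(i:ℕ)-1, hb0⟩).2
      have h3 : s (Fin.succ ⟨(i:ℕ)-1, hb0⟩) ≤ s i := hms' _ _ (by
        show (i:ℕ)-1+1 ≤ (i:ℕ)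
        omega)
      linarith
  · rcases le_or_gt ((i:ℕ)+1) k with hle | hgt
    · have hbi : (i:ℕ) < k := by omega
      have hrw : t i.succ = u ⟨(i:ℕ), hbi⟩ :=
        htm i.succ (by rw [hiv2]; omega) (by rw [hiv2]; omega)
      rw [hrw]
      have h2 := (huIoo ⟨(i:ℕ), hbi⟩).1
      have h3 : s i ≤ s (Fin.castSucc ⟨(i:ℕ), hbi⟩) := hms' _ _ (by
        show (i:ℕ) ≤ (i:ℕ)
        exact le_rfl)
      linarith
    · rw [hte i.succ (by rw [hiv2]; omega)]
      have h4 : s (Fin.last k) < zp := hzpIoo.1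
      have h5 : s i ≤ s (Fin.last k) := hms' _ _ (by
        show (i:ℕ) ≤ k
        have := i.isLt
        omega)
      linarith

end InterHelp

namespace InterHelp
open Polynomial Finset

lemma main_aux : ∀ (D : ℕ) (f g h : Polynomial ℝ) (a b : ℝ), f.natDegree = D →
    f.Monic → g.Monic → h.Monic →
    f.natDegree = g.natDegree + 1 → g.natDegree = h.natDegree + 1 → b < 0 →
    f = (X + Polynomial.C a) * g + Polynomial.C b * h →
    (RealRootedInterlacedBy f g ↔ RealRootedInterlacedBy g h) := by
  intro D
  induction D using Nat.strong_induction_on with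
  | _ D IH =>
  intro f g h a b hD hf hg hh hdeg1 hdeg2 hb hrec
  by_cases hcr : ∃ x : ℝ, f.IsRoot x ∧ g.IsRoot x
  · obtain ⟨c, hfc, hgc⟩ := hcr
    have hb0 : b ≠ 0 := ne_of_lt hb
    have hhc : h.IsRoot c := by
      have e1 : g.eval c = 0 := hgc
      have e2 : f.eval c = 0 := hfc
      have := congrArg (Polynomial.eval c) hrec
      rw [e2] at this
      simp [e1] at this
      rcases this with h' | h'
      · exact absurd h' hb0
      · exact h'
    have hffac : (X - Polynomial.C c) * (f /ₘ (X - Polynomial.C c)) = f :=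
      Polynomial.mul_divByMonic_eq_iff_isRoot.mpr hfc
    have hgfac : (X - Polynomial.C c) * (g /ₘ (X - Polynomial.C c)) = g :=
      Polynomial.mul_divByMonic_eq_iff_isRoot.mpr hgc
    have hhfac : (X - Polynomial.C c) * (h /ₘ (X - Polynomial.C c)) = h :=
      Polynomial.mul_divByMonic_eq_iff_isRoot.mpr hhc
    have hf' : (f /ₘ (X - Polynomial.C c)).Monic :=
      (Polynomial.monic_X_sub_C c).of_mul_monic_left (by rw [hffac]; exact hf)
    have hg' : (g /ₘ (X - Polynomial.C c)).Monic :=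
      (Polynomial.monic_X_sub_C c).of_mul_monic_left (by rw [hgfac]; exact hg)
    have hh' : (h /ₘ (X - Polynomial.C c)).Monic :=
      (Polynomial.monic_X_sub_C c).of_mul_monic_left (by rw [hhfac]; exact hh)
    have hh1 : 1 ≤ h.natDegree := by
      by_contra h0
      push_neg at h0
      have : h.natDegree = 0 := by omega
      have : h = 1 := (Polynomial.Monic.natDegree_eq_zero hh).mp this
      rw [this] at hhc
      simpa using hhc
    have hdf' : (f /ₘ (X - Polynomial.C c)).natDegree = f.natDegree - 1 := by
      rw [Polynomial.natDegree_divByMonic f (Polynomial.monic_X_sub_C c),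
        Polynomial.natDegree_X_sub_C]
    have hdg' : (g /ₘ (X - Polynomial.C c)).natDegree = g.natDegree - 1 := by
      rw [Polynomial.natDegree_divByMonic g (Polynomial.monic_X_sub_C c),
        Polynomial.natDegree_X_sub_C]
    have hdh' : (h /ₘ (X - Polynomial.C c)).natDegree = h.natDegree - 1 := by
      rw [Polynomial.natDegree_divByMonic h (Polynomial.monic_X_sub_C c),
        Polynomial.natDegree_X_sub_C]
    have hrec' : f /ₘ (X - Polynomial.C c)
        = (X + Polynomial.C a) * (g /ₘ (X - Polynomial.C c))
          + Polynomial.C b * (h /ₘ (X - Polynomial.C c)) := by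
      apply mul_left_cancel₀ (Polynomial.X_sub_C_ne_zero c)
      rw [hffac, hrec]
      conv_lhs => rw [← hgfac, ← hhfac]
      ring
    have hiff' := IH ((f /ₘ (X - Polynomial.C c)).natDegree)
      (by rw [hdf']; omega)
      (f /ₘ (X - Polynomial.C c)) (g /ₘ (X - Polynomial.C c)) (h /ₘ (X - Polynomial.C c))
      a b rfl hf' hg' hh' (by omega) (by omega) hb hrec'
    constructor
    · intro H
      exact mul_RRIB hg.ne_zero hh.ne_zero hgc hhc
        (hiff'.mp (div_RRIB hf.ne_zero hg.ne_zero hfc hgc H))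
    · intro H
      exact mul_RRIB hf.ne_zero hg.ne_zero hfc hgc
        (hiff'.mpr (div_RRIB hg.ne_zero hh.ne_zero hgc hhc H))
  · push_neg at hcr
    have hcr' : ∀ x : ℝ, ¬(f.IsRoot x ∧ g.IsRoot x) := by
      intro x ⟨h1, h2⟩
      exact hcr x h1 h2
    constructor
    · exact forward_generic f g h a b hf hg hh hdeg1 hdeg2 hb hrec hcr'
    · exact backward_generic f g h a b hf hg hh hdeg1 hdeg2 hb hrec hcr'

end InterHelp


end InterlacingHelpers

theorem interlacing_transfer (f g h : Polynomial ℝ) (a b : ℝ)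
    (hf : f.Monic) (hg : g.Monic) (hh : h.Monic)
    (hdeg1 : f.natDegree = g.natDegree + 1) (hdeg2 : g.natDegree = h.natDegree + 1)
    (hb : b < 0)
    (hrec : f = (Polynomial.X + Polynomial.C a) * g + Polynomial.C b * h) :
    RealRootedInterlacedBy f g ↔ RealRootedInterlacedBy g h :=
  InterHelp.main_aux f.natDegree f g h a b rfl hf hg hh hdeg1 hdeg2 hb hrec
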